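/- Assume 𝒜 ≠ 0 or ŝ ≠ 0. Let D ⊆ ℝ^d be closed and convex and let x₀ ∈ D solve max_{x∈D} E[U(W(x))] for the exponential utility U(w) = −e^{−aw}, a > 0. If x₀ lies in the interior of D in the Euclidean topology of ℝ^d, then x₀ = (1/(aW₀))·[Σ⁻¹γ − q_d·Σ⁻¹(μ − 𝟏r_f)], where q_d is the minimizer of Q(θ) over D̄_q. -/

import Mathlib

open MeasureTheory ProbabilityTheory Filter Matrix
open scoped ENNReal NNReal Topology

noncomputable section

/-- Signed expectation with values in `EReal`. -/
def eexp {Ω : Type*} [MeasurableSpace Ω] (P : Measure Ω) (f : Ω → ℝ) : EReal :=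
  ((∫⁻ ω, ENNReal.ofReal (f ω) ∂P : ℝ≥0∞) : EReal) -
    ((∫⁻ ω, ENNReal.ofReal (-(f ω)) ∂P : ℝ≥0∞) : EReal)

/-- NMVM return vector `X = μ + γ Z + √Z A N`. -/
def nmvmX {Ω : Type*} {d : ℕ} (μ γ : Fin d → ℝ) (A : Matrix (Fin d) (Fin d) ℝ)
    (Z : Ω → ℝ) (N : Ω → Fin d → ℝ) (ω : Ω) : Fin d → ℝ :=
  fun i => μ i + γ i * Z ω + Real.sqrt (Z ω) * (A *ᵥ N ω) i

/-- Next-period wealth `W(x) = W₀(1+r_f) + W₀ xᵀ(X − 𝟏 r_f)` of portfolio `x`. -/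
def wealth {Ω : Type*} {d : ℕ} (μ γ : Fin d → ℝ) (A : Matrix (Fin d) (Fin d) ℝ)
    (Z : Ω → ℝ) (N : Ω → Fin d → ℝ) (rf W0 : ℝ) (x : Fin d → ℝ) (ω : Ω) : ℝ :=
  W0 * (1 + rf) + W0 * ∑ i, x i * (nmvmX μ γ A Z N ω i - rf)

/-- Expected exponential utility `E[-e^{-a W(x)}]` as an extended real. -/
def expUtil {Ω : Type*} [MeasurableSpace Ω] (P : Measure Ω) {d : ℕ}
    (μ γ : Fin d → ℝ) (A : Matrix (Fin d) (Fin d) ℝ)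
    (Z : Ω → ℝ) (N : Ω → Fin d → ℝ) (rf W0 a : ℝ) (x : Fin d → ℝ) : EReal :=
  eexp P fun ω => -Real.exp (-(a * wealth μ γ A Z N rf W0 x ω))

/-- Laplace transform `ℒ_Z(s) = E[e^{-sZ}]` of the mixing distribution. -/
def laplaceZ {Ω : Type*} [MeasurableSpace Ω] (P : Measure Ω) (Z : Ω → ℝ) (s : ℝ) : ℝ≥0∞ :=
  ∫⁻ ω, ENNReal.ofReal (Real.exp (-s * Z ω)) ∂P

/-- The interval `Θ`: `(−θ̂, θ̂)` with `θ̂ = √((𝒜 − 2ŝ)/𝒞)` when `ŝ = −∞` or `ℒ_Z(ŝ) = ∞`,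
and `[−θ̂, θ̂]` when `ŝ` is finite with `ℒ_Z(ŝ) < ∞`.  Equivalently (using `𝒞 > 0`):
`θ ∈ Θ` iff the argument `𝒜/2 − θ²𝒞/2` is `> ŝ`, or equals `ŝ` with `ℒ_Z(ŝ) < ∞`. -/
def ThetaSet {Ω : Type*} [MeasurableSpace Ω] (P : Measure Ω) (Z : Ω → ℝ)
    (sHat : EReal) (Acal Ccal : ℝ) : Set ℝ :=
  {θ : ℝ | sHat < ((Acal / 2 - θ ^ 2 * Ccal / 2 : ℝ) : EReal) ∨
    (((Acal / 2 - θ ^ 2 * Ccal / 2 : ℝ) : EReal) = sHat ∧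
      laplaceZ P Z (Acal / 2 - θ ^ 2 * Ccal / 2) ≠ ⊤)}

/-- The function `Q(θ) = e^{𝒞θ} ℒ_Z(𝒜/2 − θ²𝒞/2)`. -/
def Qfun {Ω : Type*} [MeasurableSpace Ω] (P : Measure Ω) (Z : Ω → ℝ)
    (Acal Ccal : ℝ) (θ : ℝ) : ℝ :=
  Real.exp (Ccal * θ) * (laplaceZ P Z (Acal / 2 - θ ^ 2 * Ccal / 2)).toReal

/-! ### Auxiliary lemmas -/

lemma gauss_pt_aux (t y : ℝ) :
    gaussianPDFReal 0 1 y * Real.exp (t * y)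
      = Real.exp (t ^ 2 / 2) * gaussianPDFReal t 1 y := by
  simp only [gaussianPDFReal, NNReal.coe_one, mul_one, sub_zero, one_div]
  rw [mul_right_comm, mul_comm (Real.exp (t ^ 2 / 2)), mul_assoc, mul_assoc]
  congr 1
  rw [← Real.exp_add, ← Real.exp_add]
  congr 1
  ring

lemma lint_exp_gauss (t : ℝ) :
    ∫⁻ y, ENNReal.ofReal (Real.exp (t * y)) ∂(gaussianReal 0 1) =
      ENNReal.ofReal (Real.exp (t ^ 2 / 2)) := by
  rw [gaussianReal_of_var_ne_zero 0 one_ne_zero,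
    lintegral_withDensity_eq_lintegral_mul _ (measurable_gaussianPDF 0 1)
      (by fun_prop)]
  have hpt : ∀ y : ℝ, (gaussianPDF 0 1 * fun y => ENNReal.ofReal (Real.exp (t * y))) y
      = ENNReal.ofReal (Real.exp (t ^ 2 / 2)) * gaussianPDF t 1 y := by
    intro y
    simp only [Pi.mul_apply, gaussianPDF,
      ← ENNReal.ofReal_mul (gaussianPDFReal_nonneg 0 1 y), gauss_pt_aux t y,
      ENNReal.ofReal_mul (Real.exp_nonneg _)]
  simp_rw [hpt]
  rw [lintegral_const_mul _ (measurable_gaussianPDF t 1),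
    lintegral_gaussianPDF_eq_one t one_ne_zero, mul_one]

lemma lintegral_pi_prod {n : ℕ} (μ : Fin n → Measure ℝ) [∀ i, SigmaFinite (μ i)]
    (f : Fin n → ℝ → ℝ≥0∞) (hf : ∀ i, Measurable (f i)) :
    ∫⁻ x, ∏ i, f i (x i) ∂(Measure.pi μ) = ∏ i, ∫⁻ t, f i t ∂(μ i) := by
  induction n with
  | zero => simp [lintegral_const, Measure.pi_univ]
  | succ n ih =>
      have mp := (measurePreserving_piFinSuccAbove μ 0).symm
      rw [← mp.lintegral_comp (f := fun x => ∏ i, f i (x i))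
        (Finset.measurable_prod _ (fun i _ => (hf i).comp (measurable_pi_apply i)))]
      simp_rw [MeasurableEquiv.piFinSuccAbove_symm_apply, Fin.insertNthEquiv,
        Equiv.coe_fn_mk, Fin.insertNth_zero']
      have hpt : ∀ y : ℝ × (Fin n → ℝ),
          (∏ i, f i ((Fin.cons y.1 y.2 : Fin (n+1) → ℝ) i)) = f 0 y.1 * ∏ i, f i.succ (y.2 i) := by
        intro y
        rw [Fin.prod_univ_succ]
        simp
      simp_rw [hpt]
      rw [lintegral_prod_mul (f := f 0) (g := fun w : Fin n → ℝ => ∏ i, f i.succ (w i))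
        (hf 0).aemeasurable
        ((Finset.measurable_prod _ (fun i _ => (hf i.succ).comp (measurable_pi_apply i))).aemeasurable)]
      simp only [Fin.zero_succAbove]
      rw [ih (fun i => μ i.succ) (fun i => f i.succ) (fun i => hf i.succ), Fin.prod_univ_succ]

lemma lint_exp_pi_gauss {d : ℕ} (b : Fin d → ℝ) :
    ∫⁻ y, ENNReal.ofReal (Real.exp (∑ i, b i * y i))
        ∂(Measure.pi fun _ : Fin d => gaussianReal 0 1) =
      ENNReal.ofReal (Real.exp ((∑ i, b i ^ 2) / 2)) := by
  have hpt : ∀ y : Fin d → ℝ, ENNReal.ofReal (Real.exp (∑ i, b i * y i))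
      = ∏ i, ENNReal.ofReal (Real.exp (b i * y i)) := by
    intro y
    rw [Real.exp_sum, ENNReal.ofReal_prod_of_nonneg (fun i _ => (Real.exp_nonneg _))]
  simp_rw [hpt]
  rw [lintegral_pi_prod (fun _ => gaussianReal 0 1)
    (fun i t => ENNReal.ofReal (Real.exp (b i * t))) (fun i => by fun_prop)]
  simp_rw [lint_exp_gauss]
  rw [← ENNReal.ofReal_prod_of_nonneg (fun i _ => (Real.exp_nonneg _)), ← Real.exp_sum,
    Finset.sum_div]

lemma mix_formula {Ω : Type*} [MeasurableSpace Ω] (P : Measure Ω) [IsProbabilityMeasure P]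
    {d : ℕ} (Z : Ω → ℝ) (N : Ω → Fin d → ℝ) (hZ : Measurable Z) (hN : Measurable N)
    (hZpos : ∀ ω, 0 ≤ Z ω)
    (hNlaw : Measure.map N P = Measure.pi fun _ : Fin d => gaussianReal 0 1)
    (hindep : IndepFun Z N P) (β : ℝ) (t : Fin d → ℝ) :
    ∫⁻ ω, ENNReal.ofReal (Real.exp (β * Z ω + Real.sqrt (Z ω) * (∑ i, t i * N ω i))) ∂P
      = ∫⁻ ω, ENNReal.ofReal (Real.exp ((β + (∑ i, t i ^ 2) / 2) * Z ω)) ∂P := by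
  have hFmeas : Measurable (fun p : ℝ × (Fin d → ℝ) =>
      ENNReal.ofReal (Real.exp (β * p.1 + Real.sqrt p.1 * ∑ i, t i * p.2 i))) := by
    fun_prop
  have hmap : Measure.map (fun ω => (Z ω, N ω)) P
      = (Measure.map Z P).prod (Measure.map N P) :=
    (indepFun_iff_map_prod_eq_prod_map_map hZ.aemeasurable hN.aemeasurable).mp hindep
  have h0 : ∀ᵐ z ∂(Measure.map Z P), 0 ≤ z := by
    rw [ae_map_iff hZ.aemeasurable measurableSet_Ici]
    exact ae_of_all _ hZpos
  calc ∫⁻ ω, ENNReal.ofReal (Real.exp (β * Z ω + Real.sqrt (Z ω) * (∑ i, t i * N ω i))) ∂P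
      = ∫⁻ p, ENNReal.ofReal (Real.exp (β * p.1 + Real.sqrt p.1 * ∑ i, t i * p.2 i))
          ∂(Measure.map (fun ω => (Z ω, N ω)) P) :=
        (lintegral_map hFmeas (hZ.prodMk hN)).symm
    _ = ∫⁻ z, ∫⁻ n, ENNReal.ofReal (Real.exp (β * z + Real.sqrt z * ∑ i, t i * n i))
          ∂(Measure.map N P) ∂(Measure.map Z P) := by
        rw [hmap, lintegral_prod _ hFmeas.aemeasurable]
    _ = ∫⁻ z, ENNReal.ofReal (Real.exp ((β + (∑ i, t i ^ 2) / 2) * z)) ∂(Measure.map Z P) := by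
        refine lintegral_congr_ae (h0.mono fun z hz => ?_)
        have hinner : ∀ n : Fin d → ℝ,
            ENNReal.ofReal (Real.exp (β * z + Real.sqrt z * ∑ i, t i * n i))
            = ENNReal.ofReal (Real.exp (β * z)) *
              ENNReal.ofReal (Real.exp (∑ i, (Real.sqrt z * t i) * n i)) := by
          intro n
          rw [← ENNReal.ofReal_mul (Real.exp_nonneg _), ← Real.exp_add]
          congr 2
          rw [Finset.mul_sum]
          ring_nf
        simp_rw [hinner]
        rw [lintegral_const_mul _ (by fun_prop), hNlaw, lint_exp_pi_gauss,
          ← ENNReal.ofReal_mul (Real.exp_nonneg _), ← Real.exp_add]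
        congr 2
        have hsq : ∀ i : Fin d, (Real.sqrt z * t i) ^ 2 = z * t i ^ 2 := by
          intro i
          rw [mul_pow, Real.sq_sqrt hz]
        simp_rw [hsq, ← Finset.mul_sum]
        ring
    _ = ∫⁻ ω, ENNReal.ofReal (Real.exp ((β + (∑ i, t i ^ 2) / 2) * Z ω)) ∂P :=
        lintegral_map (by fun_prop) hZ

lemma J_formula {Ω : Type*} [MeasurableSpace Ω] (P : Measure Ω) [IsProbabilityMeasure P]
    {d : ℕ} (μ γ : Fin d → ℝ) (A : Matrix (Fin d) (Fin d) ℝ)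
    (Z : Ω → ℝ) (N : Ω → Fin d → ℝ) (hZ : Measurable Z) (hN : Measurable N)
    (hZpos : ∀ ω, 0 ≤ Z ω)
    (hNlaw : Measure.map N P = Measure.pi fun _ : Fin d => gaussianReal 0 1)
    (hindep : IndepFun Z N P) (rf W0 a : ℝ) (x : Fin d → ℝ) :
    ∫⁻ ω, ENNReal.ofReal (Real.exp (-(a * wealth μ γ A Z N rf W0 x ω))) ∂P
      = ENNReal.ofReal (Real.exp (-(a * W0 * (1 + rf)) - a * W0 * (x ⬝ᵥ fun i => μ i - rf)))
        * laplaceZ P Z (a * W0 * (x ⬝ᵥ γ) - (a * W0) ^ 2 * (x ⬝ᵥ ((A * Aᵀ) *ᵥ x)) / 2) := by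
  set β : ℝ := -(a * W0) * (x ⬝ᵥ γ) with hβ
  set t : Fin d → ℝ := fun i => -(a * W0) * (x ᵥ* A) i with ht
  have hw : ∀ ω, -(a * wealth μ γ A Z N rf W0 x ω)
      = (-(a * W0 * (1 + rf)) - a * W0 * (x ⬝ᵥ fun i => μ i - rf))
        + (β * Z ω + Real.sqrt (Z ω) * (∑ i, t i * N ω i)) := by
    intro ω
    have hsum : ∑ i, x i * (nmvmX μ γ A Z N ω i - rf)
        = (x ⬝ᵥ fun i => μ i - rf) + (x ⬝ᵥ γ) * Z ω
          + Real.sqrt (Z ω) * ((x ᵥ* A) ⬝ᵥ N ω) := by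
      rw [← dotProduct_mulVec]
      have hterm : ∀ i, x i * (nmvmX μ γ A Z N ω i - rf)
          = x i * (μ i - rf) + (x i * γ i) * Z ω
            + Real.sqrt (Z ω) * (x i * (A *ᵥ N ω) i) := fun i => by
        simp only [nmvmX]; ring
      simp_rw [hterm, Finset.sum_add_distrib, ← Finset.sum_mul, ← Finset.mul_sum]
      rfl
    have htsum : ∑ i, t i * N ω i = -(a * W0) * ((x ᵥ* A) ⬝ᵥ N ω) := by
      simp only [ht, dotProduct, Finset.mul_sum]
      exact Finset.sum_congr rfl fun i _ => by ring
    rw [wealth, hsum, htsum, hβ]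
    ring
  have hsplit : ∀ ω, ENNReal.ofReal (Real.exp (-(a * wealth μ γ A Z N rf W0 x ω)))
      = ENNReal.ofReal (Real.exp (-(a * W0 * (1 + rf)) - a * W0 * (x ⬝ᵥ fun i => μ i - rf)))
        * ENNReal.ofReal (Real.exp (β * Z ω + Real.sqrt (Z ω) * (∑ i, t i * N ω i))) := by
    intro ω
    rw [hw ω, Real.exp_add, ENNReal.ofReal_mul (Real.exp_nonneg _)]
  simp_rw [hsplit]
  rw [lintegral_const_mul _ (by fun_prop),
    mix_formula P Z N hZ hN hZpos hNlaw hindep β t]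
  congr 1
  rw [laplaceZ]
  congr 1
  funext ω
  congr 2
  have hAA : x ⬝ᵥ ((A * Aᵀ) *ᵥ x) = ∑ i, (x ᵥ* A) i ^ 2 := by
    rw [← Matrix.mulVec_mulVec, Matrix.dotProduct_mulVec, Matrix.mulVec_transpose]
    simp [dotProduct, sq]
  have hts : ∑ i, t i ^ 2 = (a * W0) ^ 2 * ∑ i, (x ᵥ* A) i ^ 2 := by
    simp only [ht, Finset.mul_sum]
    exact Finset.sum_congr rfl fun i _ => by ring
  rw [hAA, hts, hβ]
  ring

section Alg
variable {d : ℕ} {S : Matrix (Fin d) (Fin d) ℝ}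

lemma symm_dot (hS : S.PosDef) (a b : Fin d → ℝ) :
    a ⬝ᵥ (S *ᵥ b) = b ⬝ᵥ (S *ᵥ a) := by
  have hsymm : Sᵀ = S := by
    have := hS.1
    rw [Matrix.IsHermitian] at this
    simpa using this
  rw [Matrix.dotProduct_mulVec, ← Matrix.mulVec_transpose, hsymm, dotProduct_comm]

lemma S_inv_mulvec (hS : S.PosDef) (v : Fin d → ℝ) : S *ᵥ (S⁻¹ *ᵥ v) = v := by
  rw [Matrix.mulVec_mulVec,
    Matrix.mul_nonsing_inv _ ((Matrix.isUnit_iff_isUnit_det _).mp hS.isUnit),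
    Matrix.one_mulVec]

lemma quad_identity (hS : S.PosDef) (γ m y : Fin d → ℝ) (q : ℝ)
    (hq : q * (m ⬝ᵥ (S⁻¹ *ᵥ m)) = γ ⬝ᵥ (S⁻¹ *ᵥ m) - y ⬝ᵥ m) :
    y ⬝ᵥ γ - y ⬝ᵥ (S *ᵥ y) / 2
      = (γ ⬝ᵥ (S⁻¹ *ᵥ γ)) / 2 - q ^ 2 * (m ⬝ᵥ (S⁻¹ *ᵥ m)) / 2
        - (y - (S⁻¹ *ᵥ γ - q • (S⁻¹ *ᵥ m))) ⬝ᵥ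
            (S *ᵥ (y - (S⁻¹ *ᵥ γ - q • (S⁻¹ *ᵥ m)))) / 2 := by
  set u := S⁻¹ *ᵥ γ with hu
  set w := S⁻¹ *ᵥ m with hw
  set e := u - q • w with he
  have hSe : S *ᵥ e = γ - q • m := by
    rw [he, Matrix.mulVec_sub, Matrix.mulVec_smul, hu, hw, S_inv_mulvec hS,
      S_inv_mulvec hS]
  have hmu : m ⬝ᵥ u = γ ⬝ᵥ w := by
    rw [hu, hw, Matrix.dotProduct_mulVec, Matrix.dotProduct_mulVec]
    have hsymm : S⁻¹ᵀ = S⁻¹ := by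
      have h2 := hS.inv.1
      rw [Matrix.IsHermitian] at h2
      simpa using h2
    rw [← Matrix.mulVec_transpose, ← Matrix.mulVec_transpose, hsymm, dotProduct_comm,
      dotProduct_comm (S⁻¹ *ᵥ γ) m, symm_dot hS.inv]
  have hySe : y ⬝ᵥ (S *ᵥ e) = y ⬝ᵥ γ - q * (y ⬝ᵥ m) := by
    rw [hSe, dotProduct_sub, dotProduct_smul]
    simp [smul_eq_mul]
  have heSy : e ⬝ᵥ (S *ᵥ y) = y ⬝ᵥ γ - q * (y ⬝ᵥ m) := by
    rw [symm_dot hS, hySe]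
  have heSe : e ⬝ᵥ (S *ᵥ e) = γ ⬝ᵥ u - 2 * q * (γ ⬝ᵥ w) + q ^ 2 * (m ⬝ᵥ w) := by
    rw [hSe, dotProduct_sub, dotProduct_smul, he, sub_dotProduct, sub_dotProduct,
      smul_dotProduct, smul_dotProduct]
    have h1 : u ⬝ᵥ γ = γ ⬝ᵥ u := dotProduct_comm _ _
    have h2 : w ⬝ᵥ γ = γ ⬝ᵥ w := dotProduct_comm _ _
    have h3 : u ⬝ᵥ m = γ ⬝ᵥ w := by rw [dotProduct_comm, hmu]
    have h4 : w ⬝ᵥ m = m ⬝ᵥ w := dotProduct_comm _ _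
    simp only [smul_eq_mul, h1, h2, h3, h4]
    ring
  have hexp : (y - e) ⬝ᵥ (S *ᵥ (y - e))
      = y ⬝ᵥ (S *ᵥ y) - y ⬝ᵥ (S *ᵥ e) - e ⬝ᵥ (S *ᵥ y) + e ⬝ᵥ (S *ᵥ e) := by
    rw [Matrix.mulVec_sub, sub_dotProduct, dotProduct_sub, dotProduct_sub]
    ring
  rw [hexp, hySe, heSy, heSe]
  have hq' : q * (m ⬝ᵥ w) = γ ⬝ᵥ w - y ⬝ᵥ m := hq
  linear_combination q * hq'
end Alg

lemma laplace_anti {Ω : Type*} [MeasurableSpace Ω] (P : Measure Ω) (Z : Ω → ℝ)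
    (hZpos : ∀ ω, 0 ≤ Z ω) {s₁ s₂ : ℝ} (h : s₁ ≤ s₂) :
    laplaceZ P Z s₂ ≤ laplaceZ P Z s₁ :=
  lintegral_mono fun ω => ENNReal.ofReal_le_ofReal (Real.exp_le_exp.2
    (by nlinarith [hZpos ω]))

lemma laplace_strict {Ω : Type*} [MeasurableSpace Ω] (P : Measure Ω) (Z : Ω → ℝ)
    (hZ : Measurable Z) (hZpos : ∀ ω, 0 ≤ Z ω) (hZ0 : P {ω | 0 < Z ω} ≠ 0)
    {s₁ s₂ : ℝ} (h : s₁ < s₂) (hfin : laplaceZ P Z s₁ ≠ ⊤) :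
    laplaceZ P Z s₂ < laplaceZ P Z s₁ := by
  refine lt_of_le_of_ne (laplace_anti P Z hZpos h.le) ?_
  intro heq
  have hle : (fun ω => ENNReal.ofReal (Real.exp (-s₂ * Z ω)))
      ≤ fun ω => ENNReal.ofReal (Real.exp (-s₁ * Z ω)) :=
    fun ω => ENNReal.ofReal_le_ofReal (Real.exp_le_exp.2 (by nlinarith [hZpos ω]))
  have hfmeas : Measurable fun ω => ENNReal.ofReal (Real.exp (-s₂ * Z ω)) := by fun_prop
  have hsub : ∫⁻ ω, (ENNReal.ofReal (Real.exp (-s₁ * Z ω))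
      - ENNReal.ofReal (Real.exp (-s₂ * Z ω))) ∂P = 0 := by
    rw [lintegral_sub hfmeas (by rw [← laplaceZ]; rw [← heq] at hfin; exact hfin)
      (ae_of_all _ hle)]
    rw [← laplaceZ, ← laplaceZ, heq, tsub_self]
  have hae := (lintegral_eq_zero_iff (by fun_prop)).mp hsub
  have hae2 : ∀ᵐ ω ∂P, ¬ (0 < Z ω) := by
    refine hae.mono fun ω hω => ?_
    intro hpos
    simp only [Pi.zero_apply, tsub_eq_zero_iff_le] at hω
    have := (ENNReal.ofReal_le_ofReal_iff (Real.exp_nonneg _)).mp hω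
    rw [Real.exp_le_exp] at this
    nlinarith
  rw [ae_iff] at hae2
  simp only [not_not] at hae2
  exact hZ0 hae2

lemma local_to_global_aux {a b : ℝ≥0∞} (ha : a ≠ ⊤) (hb : b ≠ ⊤) {l : ℝ}
    (hl0 : 0 < l) (hl1 : l ≤ 1)
    (hineq : a ≤ ENNReal.ofReal (1 - l) * a + ENNReal.ofReal l * b) : a ≤ b := by
  have h1 : a.toReal ≤ (1 - l) * a.toReal + l * b.toReal := by
    have := ENNReal.toReal_mono (by
      exact ENNReal.add_ne_top.mpr ⟨ENNReal.mul_ne_top ENNReal.ofReal_ne_top ha,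
        ENNReal.mul_ne_top ENNReal.ofReal_ne_top hb⟩) hineq
    rwa [ENNReal.toReal_add (ENNReal.mul_ne_top ENNReal.ofReal_ne_top ha)
      (ENNReal.mul_ne_top ENNReal.ofReal_ne_top hb), ENNReal.toReal_mul,
      ENNReal.toReal_mul, ENNReal.toReal_ofReal (by linarith),
      ENNReal.toReal_ofReal hl0.le] at this
  have h2 : a.toReal ≤ b.toReal := by nlinarith
  exact (ENNReal.toReal_le_toReal ha hb).mp h2

lemma Qtil_convex {Ω : Type*} [MeasurableSpace Ω] (P : Measure Ω) (Z : Ω → ℝ)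
    (hZ : Measurable Z) (hZpos : ∀ ω, 0 ≤ Z ω) (Acal Ccal : ℝ) (hC : 0 ≤ Ccal)
    (θ₁ θ₂ l : ℝ) (hl0 : 0 ≤ l) (hl1 : l ≤ 1) :
    ∫⁻ ω, ENNReal.ofReal (Real.exp (Ccal * ((1 - l) * θ₁ + l * θ₂)
        + (((1 - l) * θ₁ + l * θ₂) ^ 2 * Ccal / 2 - Acal / 2) * Z ω)) ∂P
      ≤ ENNReal.ofReal (1 - l) *
          (∫⁻ ω, ENNReal.ofReal (Real.exp (Ccal * θ₁ + (θ₁ ^ 2 * Ccal / 2 - Acal / 2) * Z ω)) ∂P)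
        + ENNReal.ofReal l *
          (∫⁻ ω, ENNReal.ofReal (Real.exp (Ccal * θ₂ + (θ₂ ^ 2 * Ccal / 2 - Acal / 2) * Z ω)) ∂P) := by
  have hpt : ∀ ω, ENNReal.ofReal (Real.exp (Ccal * ((1 - l) * θ₁ + l * θ₂)
      + (((1 - l) * θ₁ + l * θ₂) ^ 2 * Ccal / 2 - Acal / 2) * Z ω))
      ≤ ENNReal.ofReal (1 - l)
          * ENNReal.ofReal (Real.exp (Ccal * θ₁ + (θ₁ ^ 2 * Ccal / 2 - Acal / 2) * Z ω))
        + ENNReal.ofReal l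
          * ENNReal.ofReal (Real.exp (Ccal * θ₂ + (θ₂ ^ 2 * Ccal / 2 - Acal / 2) * Z ω)) := by
    intro ω
    set h1 : ℝ := Ccal * θ₁ + (θ₁ ^ 2 * Ccal / 2 - Acal / 2) * Z ω with hh1
    set h2 : ℝ := Ccal * θ₂ + (θ₂ ^ 2 * Ccal / 2 - Acal / 2) * Z ω with hh2
    have hconv : Ccal * ((1 - l) * θ₁ + l * θ₂)
        + (((1 - l) * θ₁ + l * θ₂) ^ 2 * Ccal / 2 - Acal / 2) * Z ω
        ≤ (1 - l) * h1 + l * h2 := by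
      rw [hh1, hh2]
      nlinarith [mul_nonneg (mul_nonneg (mul_nonneg hl0 (by linarith : (0:ℝ) ≤ 1 - l))
        (mul_nonneg hC (hZpos ω))) (sq_nonneg (θ₁ - θ₂))]
    have hexp1 : Real.exp (Ccal * ((1 - l) * θ₁ + l * θ₂)
        + (((1 - l) * θ₁ + l * θ₂) ^ 2 * Ccal / 2 - Acal / 2) * Z ω)
        ≤ Real.exp ((1 - l) * h1 + l * h2) := Real.exp_le_exp.2 hconv
    have hexp2 : Real.exp ((1 - l) * h1 + l * h2)
        ≤ (1 - l) * Real.exp h1 + l * Real.exp h2 := by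
      have := convexOn_exp.2 (Set.mem_univ h1) (Set.mem_univ h2)
        (by linarith : (0:ℝ) ≤ 1 - l) hl0 (by ring)
      simpa [smul_eq_mul] using this
    calc ENNReal.ofReal _ ≤ ENNReal.ofReal ((1 - l) * Real.exp h1 + l * Real.exp h2) :=
          ENNReal.ofReal_le_ofReal (hexp1.trans hexp2)
      _ = _ := by
          rw [ENNReal.ofReal_add (mul_nonneg (by linarith) (Real.exp_nonneg _))
            (mul_nonneg hl0 (Real.exp_nonneg _)),
            ENNReal.ofReal_mul (by linarith), ENNReal.ofReal_mul hl0]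
  calc ∫⁻ ω, ENNReal.ofReal (Real.exp (Ccal * ((1 - l) * θ₁ + l * θ₂)
        + (((1 - l) * θ₁ + l * θ₂) ^ 2 * Ccal / 2 - Acal / 2) * Z ω)) ∂P
      ≤ ∫⁻ ω, (ENNReal.ofReal (1 - l)
          * ENNReal.ofReal (Real.exp (Ccal * θ₁ + (θ₁ ^ 2 * Ccal / 2 - Acal / 2) * Z ω))
        + ENNReal.ofReal l
          * ENNReal.ofReal (Real.exp (Ccal * θ₂ + (θ₂ ^ 2 * Ccal / 2 - Acal / 2) * Z ω))) ∂P :=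
        lintegral_mono hpt
    _ = _ := by
        rw [lintegral_add_left (by fun_prop), lintegral_const_mul _ (by fun_prop),
          lintegral_const_mul _ (by fun_prop)]

lemma dotProduct_self_pos {d : ℕ} {m : Fin d → ℝ} (h : m ≠ 0) : 0 < m ⬝ᵥ m := by
  rcases lt_or_eq_of_le (Finset.sum_nonneg fun i _ => mul_self_nonneg (m i)) with h1 | h1
  · exact h1
  · exact absurd (dotProduct_self_eq_zero.mp h1.symm) h

set_option maxHeartbeats 2000000 in
/-- if the solution `x₀` of the exponential-utility problem on a closed convex
domain `D` lies in the interior of `D`, then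
`x₀ = (1/(aW₀))[Σ⁻¹γ − q_d Σ⁻¹(μ − 𝟏 r_f)]` where `q_d` minimizes `Q` over `D̄_q`. -/
theorem stmt1 {Ω : Type*} [MeasurableSpace Ω] (P : Measure Ω) [IsProbabilityMeasure P]
    {d : ℕ} (μ γ : Fin d → ℝ) (A : Matrix (Fin d) (Fin d) ℝ)
    (Z : Ω → ℝ) (N : Ω → Fin d → ℝ)
    (hZmeas : Measurable Z) (hNmeas : Measurable N)
    (hZpos : ∀ ω, 0 ≤ Z ω)
    (hNlaw : Measure.map N P = Measure.pi fun _ : Fin d => gaussianReal 0 1)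
    (hindep : IndepFun Z N P)
    (hPD : (A * Aᵀ).PosDef)
    (rf W0 : ℝ) (hW0 : 0 < W0)
    (hμrf : (fun i => μ i - rf) ≠ 0)
    (a : ℝ) (ha : 0 < a)
    -- the critical value ŝ of the Laplace transform of Z
    (sHat : EReal) (hsHat_le : sHat ≤ 0)
    (hsHat_fin : ∀ s : ℝ, sHat < (s : EReal) → laplaceZ P Z s ≠ ⊤)
    (hsHat_inf : ∀ s : ℝ, (s : EReal) < sHat → laplaceZ P Z s = ⊤)
    -- Assume 𝒜 ≠ 0 or ŝ ≠ 0
    (hAs : γ ⬝ᵥ ((A * Aᵀ)⁻¹ *ᵥ γ) ≠ 0 ∨ sHat ≠ 0)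
    (D : Set (Fin d → ℝ)) (hDclosed : IsClosed D) (hDconvex : Convex ℝ D)
    (x₀ : Fin d → ℝ) (hx₀D : x₀ ∈ D) (hx₀int : x₀ ∈ interior D)
    (hfin : ⊥ < expUtil P μ γ A Z N rf W0 a x₀)
    (hopt : ∀ x ∈ D, expUtil P μ γ A Z N rf W0 a x ≤ expUtil P μ γ A Z N rf W0 a x₀) :
    ∃ qd ∈ {q : ℝ | ∃ c ∈ {c : ℝ | ∃ x ∈ D, x ⬝ᵥ (fun i => μ i - rf) = c},
        q = (γ ⬝ᵥ ((A * Aᵀ)⁻¹ *ᵥ fun i => μ i - rf) - a * W0 * c) /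
            ((fun i => μ i - rf) ⬝ᵥ ((A * Aᵀ)⁻¹ *ᵥ fun i => μ i - rf))} ∩
      ThetaSet P Z sHat (γ ⬝ᵥ ((A * Aᵀ)⁻¹ *ᵥ γ))
        ((fun i => μ i - rf) ⬝ᵥ ((A * Aᵀ)⁻¹ *ᵥ fun i => μ i - rf)),
      (∀ θ ∈ {q : ℝ | ∃ c ∈ {c : ℝ | ∃ x ∈ D, x ⬝ᵥ (fun i => μ i - rf) = c},
          q = (γ ⬝ᵥ ((A * Aᵀ)⁻¹ *ᵥ fun i => μ i - rf) - a * W0 * c) /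
              ((fun i => μ i - rf) ⬝ᵥ ((A * Aᵀ)⁻¹ *ᵥ fun i => μ i - rf))} ∩
        ThetaSet P Z sHat (γ ⬝ᵥ ((A * Aᵀ)⁻¹ *ᵥ γ))
          ((fun i => μ i - rf) ⬝ᵥ ((A * Aᵀ)⁻¹ *ᵥ fun i => μ i - rf)),
        Qfun P Z (γ ⬝ᵥ ((A * Aᵀ)⁻¹ *ᵥ γ))
            ((fun i => μ i - rf) ⬝ᵥ ((A * Aᵀ)⁻¹ *ᵥ fun i => μ i - rf)) qd ≤
          Qfun P Z (γ ⬝ᵥ ((A * Aᵀ)⁻¹ *ᵥ γ))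
            ((fun i => μ i - rf) ⬝ᵥ ((A * Aᵀ)⁻¹ *ᵥ fun i => μ i - rf)) θ) ∧
      x₀ = (1 / (a * W0)) •
        ((A * Aᵀ)⁻¹ *ᵥ γ - qd • ((A * Aᵀ)⁻¹ *ᵥ fun i => μ i - rf)) := by
  classical
  set m : Fin d → ℝ := fun i => μ i - rf with hm
  set S : Matrix (Fin d) (Fin d) ℝ := A * Aᵀ with hSdef
  set Acal : ℝ := γ ⬝ᵥ (S⁻¹ *ᵥ γ) with hAcal
  set Bcal : ℝ := γ ⬝ᵥ (S⁻¹ *ᵥ m) with hBcal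
  set Ccal : ℝ := m ⬝ᵥ (S⁻¹ *ᵥ m) with hCcal
  have haW0 : 0 < a * W0 := mul_pos ha hW0
  have hCpos : 0 < Ccal := by
    have := hPD.inv.dotProduct_mulVec_pos hμrf
    simpa [hCcal] using this
  set J : (Fin d → ℝ) → ℝ≥0∞ :=
    fun x => ∫⁻ ω, ENNReal.ofReal (Real.exp (-(a * wealth μ γ A Z N rf W0 x ω))) ∂P with hJdef
  have hJx : ∀ x : Fin d → ℝ, J x
      = ENNReal.ofReal (Real.exp (-(a * W0 * (1 + rf)) - a * W0 * (x ⬝ᵥ m)))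
        * laplaceZ P Z (a * W0 * (x ⬝ᵥ γ) - (a * W0) ^ 2 * (x ⬝ᵥ (S *ᵥ x)) / 2) := by
    intro x
    rw [hJdef]
    exact J_formula P μ γ A Z N hZmeas hNmeas hZpos hNlaw hindep rf W0 a x
  have hne0 : ∀ r : ℝ, ENNReal.ofReal (Real.exp r) ≠ 0 := by
    intro r
    simp [ENNReal.ofReal_eq_zero, not_le, Real.exp_pos]
  have hEU : ∀ x : Fin d → ℝ, expUtil P μ γ A Z N rf W0 a x = -(J x : EReal) := by
    intro x
    rw [expUtil, eexp]
    have h1 : ∫⁻ ω, ENNReal.ofReal (-Real.exp (-(a * wealth μ γ A Z N rf W0 x ω))) ∂P = 0 := by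
      have hz : ∀ ω, ENNReal.ofReal (-Real.exp (-(a * wealth μ γ A Z N rf W0 x ω))) = 0 :=
        fun ω => ENNReal.ofReal_of_nonpos (neg_nonpos.mpr (Real.exp_pos _).le)
      simp_rw [hz, lintegral_zero]
    have h2 : ∀ ω, ENNReal.ofReal (-(-Real.exp (-(a * wealth μ γ A Z N rf W0 x ω))))
        = ENNReal.ofReal (Real.exp (-(a * wealth μ γ A Z N rf W0 x ω))) := fun ω => by
      rw [neg_neg]
    simp_rw [h2, h1, hJdef]
    rw [ENNReal.coe_zero.symm]
    simp [zero_sub]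
  have hmono : ∀ x ∈ D, J x₀ ≤ J x := by
    intro x hx
    have h := hopt x hx
    rw [hEU, hEU, EReal.neg_le_neg_iff] at h
    exact EReal.coe_ennreal_le_coe_ennreal_iff.mp h
  have hJfin : J x₀ ≠ ⊤ := by
    intro hc
    rw [hEU, hc] at hfin
    simp at hfin
  have hlapfin : laplaceZ P Z
      (a * W0 * (x₀ ⬝ᵥ γ) - (a * W0) ^ 2 * (x₀ ⬝ᵥ (S *ᵥ x₀)) / 2) ≠ ⊤ := by
    intro hc
    apply hJfin
    rw [hJx x₀, hc, ENNReal.mul_top (hne0 _)]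
  obtain ⟨r, hr, hball⟩ := Metric.mem_nhds_iff.mp (mem_interior_iff_mem_nhds.mp hx₀int)
  by_cases hZ0 : P {ω | 0 < Z ω} = 0
  · -- degenerate case : Z = 0 a.e., no interior optimum can exist
    exfalso
    have hZae : ∀ᵐ ω ∂P, Z ω = 0 := by
      rw [ae_iff]
      refine measure_mono_null ?_ hZ0
      intro ω hω
      simp only [Set.mem_setOf_eq] at hω ⊢
      exact lt_of_le_of_ne (hZpos ω) (Ne.symm hω)
    have hlap1 : ∀ s : ℝ, laplaceZ P Z s = 1 := by
      intro s
      rw [laplaceZ]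
      have : ∫⁻ ω, ENNReal.ofReal (Real.exp (-s * Z ω)) ∂P = ∫⁻ _, 1 ∂P := by
        refine lintegral_congr_ae (hZae.mono fun ω hω => ?_)
        simp [hω]
      rw [this, lintegral_one, measure_univ]
    set ep : ℝ := r / (2 * (‖m‖ + 1)) with hep
    have hep0 : 0 < ep := by positivity
    set x₁ : Fin d → ℝ := x₀ + ep • m with hx₁
    have hx₁D : x₁ ∈ D := by
      apply hball
      simp only [Metric.mem_ball, dist_eq_norm, hx₁, add_sub_cancel_left, norm_smul,
        Real.norm_eq_abs, abs_of_pos hep0]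
      have hmlt : ‖m‖ < ‖m‖ + 1 := by linarith
      calc ep * ‖m‖ ≤ ep * (‖m‖ + 1) := by nlinarith [norm_nonneg m]
        _ = r / 2 := by
            rw [hep]
            field_simp
        _ < r := by linarith
    have hx₁m : x₁ ⬝ᵥ m = x₀ ⬝ᵥ m + ep * (m ⬝ᵥ m) := by
      rw [hx₁, add_dotProduct, smul_dotProduct, smul_eq_mul]
    have hmm : 0 < m ⬝ᵥ m := dotProduct_self_pos hμrf
    have hlt : J x₁ < J x₀ := by
      rw [hJx, hJx, hlap1, hlap1, mul_one, mul_one]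
      apply ENNReal.ofReal_lt_ofReal_iff_of_nonneg (Real.exp_nonneg _) |>.mpr
      rw [Real.exp_lt_exp]
      rw [hx₁m]
      nlinarith [mul_pos haW0 (mul_pos hep0 hmm)]
    exact absurd (hmono x₁ hx₁D) (not_le.mpr hlt)
  -- main case
  set c₀ : ℝ := x₀ ⬝ᵥ m with hc₀
  set qd : ℝ := (Bcal - a * W0 * c₀) / Ccal with hqd
  clear_value c₀ qd
  have hqdC : qd * Ccal = Bcal - a * W0 * c₀ := by
    rw [hqd]
    exact div_mul_cancel₀ _ hCpos.ne'
  set xθ : ℝ → (Fin d → ℝ) := fun θ => (1 / (a * W0)) • (S⁻¹ *ᵥ γ - θ • (S⁻¹ *ᵥ m)) with hxθ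
  clear_value xθ
  have hyθ : ∀ θ, (a * W0) • xθ θ = S⁻¹ *ᵥ γ - θ • (S⁻¹ *ᵥ m) := by
    intro θ
    rw [hxθ]
    simp only
    rw [smul_smul, mul_one_div, div_self haW0.ne', one_smul]
  have hs_y : ∀ x : Fin d → ℝ, a * W0 * (x ⬝ᵥ γ) - (a * W0) ^ 2 * (x ⬝ᵥ (S *ᵥ x)) / 2
      = ((a * W0) • x) ⬝ᵥ γ - (((a * W0) • x) ⬝ᵥ (S *ᵥ ((a * W0) • x))) / 2 := by
    intro x
    rw [smul_dotProduct, smul_dotProduct, Matrix.mulVec_smul, dotProduct_smul]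
    simp only [smul_eq_mul]
    ring
  have hquad : ∀ (x : Fin d → ℝ) (q : ℝ), q * Ccal = Bcal - a * W0 * (x ⬝ᵥ m) →
      a * W0 * (x ⬝ᵥ γ) - (a * W0) ^ 2 * (x ⬝ᵥ (S *ᵥ x)) / 2
        = Acal / 2 - q ^ 2 * Ccal / 2
          - (((a * W0) • x - (S⁻¹ *ᵥ γ - q • (S⁻¹ *ᵥ m))) ⬝ᵥ
              (S *ᵥ ((a * W0) • x - (S⁻¹ *ᵥ γ - q • (S⁻¹ *ᵥ m))))) / 2 := by
    intro x q hq
    rw [hs_y x]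
    refine quad_identity hPD γ m ((a * W0) • x) q ?_
    rw [smul_dotProduct, smul_eq_mul, ← hCcal, ← hBcal]
    linarith [hq]
  have hxθm : ∀ θ, xθ θ ⬝ᵥ m = (Bcal - θ * Ccal) / (a * W0) := by
    intro θ
    rw [hxθ]
    simp only [smul_dotProduct, sub_dotProduct, smul_eq_mul]
    have h1 : (S⁻¹ *ᵥ γ) ⬝ᵥ m = Bcal := by
      rw [dotProduct_comm, symm_dot hPD.inv, ← hBcal]
    have h2 : (S⁻¹ *ᵥ m) ⬝ᵥ m = Ccal := by
      rw [dotProduct_comm, ← hCcal]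
    rw [h1, h2]
    field_simp
  have hx0 : x₀ = xθ qd := by
    by_contra hne
    have hyne : (a * W0) • x₀ - (S⁻¹ *ᵥ γ - qd • (S⁻¹ *ᵥ m)) ≠ 0 := by
      intro hc
      apply hne
      have h := sub_eq_zero.mp hc
      rw [hxθ]
      simp only
      rw [← h, smul_smul, one_div, inv_mul_cancel₀ haW0.ne', one_smul]
    have hδpos : 0 < ((a * W0) • x₀ - (S⁻¹ *ᵥ γ - qd • (S⁻¹ *ᵥ m))) ⬝ᵥ
        (S *ᵥ ((a * W0) • x₀ - (S⁻¹ *ᵥ γ - qd • (S⁻¹ *ᵥ m)))) := by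
      simpa using hPD.dotProduct_mulVec_pos hyne
    set v : Fin d → ℝ := xθ qd - x₀ with hv
    set ep : ℝ := min (1/2) (r / (2 * (‖v‖ + 1))) with hep
    have hep0 : 0 < ep := lt_min (by norm_num) (by positivity)
    have hep1 : ep ≤ 1/2 := min_le_left _ _
    set x₁ : Fin d → ℝ := x₀ + ep • v with hx₁
    have hx₁D : x₁ ∈ D := by
      apply hball
      simp only [Metric.mem_ball, dist_eq_norm, hx₁, add_sub_cancel_left, norm_smul,
        Real.norm_eq_abs, abs_of_pos hep0]
      have h2 : ep ≤ r / (2 * (‖v‖ + 1)) := min_le_right _ _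
      have h3 : ‖v‖ < ‖v‖ + 1 := by linarith
      calc ep * ‖v‖ ≤ (r / (2 * (‖v‖ + 1))) * ‖v‖ := by
            exact mul_le_mul_of_nonneg_right h2 (norm_nonneg _)
        _ < r := by
            rw [div_mul_eq_mul_div, div_lt_iff₀ (by positivity)]
            nlinarith [norm_nonneg v]
    have hvm : v ⬝ᵥ m = 0 := by
      rw [hv, sub_dotProduct, hxθm qd]
      have : (Bcal - qd * Ccal) / (a * W0) = c₀ := by
        rw [hqdC]
        field_simp
        ring
      rw [this, ← hc₀, sub_self]
    have hx₁m : x₁ ⬝ᵥ m = c₀ := by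
      rw [hx₁, add_dotProduct, smul_dotProduct, smul_eq_mul, hvm, mul_zero, add_zero, hc₀]
    have hy₁ : (a * W0) • x₁ - (S⁻¹ *ᵥ γ - qd • (S⁻¹ *ᵥ m))
        = (1 - ep) • ((a * W0) • x₀ - (S⁻¹ *ᵥ γ - qd • (S⁻¹ *ᵥ m))) := by
      have he := hyθ qd
      rw [hx₁, hv, ← he]
      module
    have hquad₁ : (((a * W0) • x₁ - (S⁻¹ *ᵥ γ - qd • (S⁻¹ *ᵥ m))) ⬝ᵥ
        (S *ᵥ ((a * W0) • x₁ - (S⁻¹ *ᵥ γ - qd • (S⁻¹ *ᵥ m)))))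
        = (1 - ep) ^ 2 * (((a * W0) • x₀ - (S⁻¹ *ᵥ γ - qd • (S⁻¹ *ᵥ m))) ⬝ᵥ
            (S *ᵥ ((a * W0) • x₀ - (S⁻¹ *ᵥ γ - qd • (S⁻¹ *ᵥ m))))) := by
      rw [hy₁, smul_dotProduct, Matrix.mulVec_smul, dotProduct_smul]
      simp only [smul_eq_mul]
      ring
    have hs₀ := hquad x₀ qd (by rw [← hc₀]; exact hqdC)
    have hs₁ := hquad x₁ qd (by rw [hx₁m]; exact hqdC)
    have hslt : a * W0 * (x₀ ⬝ᵥ γ) - (a * W0) ^ 2 * (x₀ ⬝ᵥ (S *ᵥ x₀)) / 2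
        < a * W0 * (x₁ ⬝ᵥ γ) - (a * W0) ^ 2 * (x₁ ⬝ᵥ (S *ᵥ x₁)) / 2 := by
      rw [hs₀, hs₁, hquad₁]
      nlinarith [mul_pos hep0 hδpos, mul_nonneg (mul_nonneg hep0.le hep0.le) hδpos.le]
    have hstrict := laplace_strict P Z hZmeas hZpos hZ0 hslt hlapfin
    have hlt : J x₁ < J x₀ := by
      rw [hJx, hJx, hx₁m, ← hc₀]
      exact (ENNReal.mul_lt_mul_iff_right (hne0 _) ENNReal.ofReal_ne_top).mpr hstrict
    exact absurd (hmono x₁ hx₁D) (not_le.mpr hlt)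
  -- x₀ is on the line; compute its s-value
  have hs0eq : a * W0 * (x₀ ⬝ᵥ γ) - (a * W0) ^ 2 * (x₀ ⬝ᵥ (S *ᵥ x₀)) / 2
      = Acal / 2 - qd ^ 2 * Ccal / 2 := by
    have h := hquad x₀ qd (by rw [← hc₀]; exact hqdC)
    rw [h]
    have h0 : (a * W0) • x₀ - (S⁻¹ *ᵥ γ - qd • (S⁻¹ *ᵥ m)) = 0 := by
      rw [hx0, hyθ qd, sub_self]
    rw [h0]
    simp
  have hufin : laplaceZ P Z (Acal / 2 - qd ^ 2 * Ccal / 2) ≠ ⊤ := hs0eq ▸ hlapfin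
  refine ⟨qd, ⟨⟨c₀, ⟨x₀, hx₀D, hc₀.symm⟩, hqd⟩, ?_⟩, ?_, ?_⟩
  · -- ThetaSet membership
    rcases lt_trichotomy sHat ((Acal / 2 - qd ^ 2 * Ccal / 2 : ℝ) : EReal) with h | h | h
    · exact Or.inl h
    · exact Or.inr ⟨h.symm, hufin⟩
    · exact absurd (hsHat_inf _ h) hufin
  · -- minimality of Q
    intro θ hθ
    obtain ⟨hθS, hθΘ⟩ := hθ
    have hufinθ : laplaceZ P Z (Acal / 2 - θ ^ 2 * Ccal / 2) ≠ ⊤ := by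
      rcases hθΘ with h | ⟨_, h⟩
      · exact hsHat_fin _ h
      · exact h
    set Qt : ℝ → ℝ≥0∞ :=
      fun t => ∫⁻ ω, ENNReal.ofReal (Real.exp (Ccal * t + (t ^ 2 * Ccal / 2 - Acal / 2) * Z ω)) ∂P
      with hQt
    clear_value Qt
    have hQteq : ∀ t, Qt t
        = ENNReal.ofReal (Real.exp (Ccal * t)) * laplaceZ P Z (Acal / 2 - t ^ 2 * Ccal / 2) := by
      intro t
      rw [hQt]
      simp only
      have hptw : ∀ ω, ENNReal.ofReal (Real.exp (Ccal * t + (t ^ 2 * Ccal / 2 - Acal / 2) * Z ω))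
          = ENNReal.ofReal (Real.exp (Ccal * t))
            * ENNReal.ofReal (Real.exp (-(Acal / 2 - t ^ 2 * Ccal / 2) * Z ω)) := by
        intro ω
        rw [← ENNReal.ofReal_mul (Real.exp_nonneg _), ← Real.exp_add]
        congr 2
        ring
      simp_rw [hptw]
      rw [lintegral_const_mul _ (by fun_prop)]
      rfl
    have hQtfin : ∀ t, laplaceZ P Z (Acal / 2 - t ^ 2 * Ccal / 2) ≠ ⊤ → Qt t ≠ ⊤ := by
      intro t h
      rw [hQteq]
      exact ENNReal.mul_ne_top ENNReal.ofReal_ne_top h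
    have hQfun : ∀ t, Qfun P Z Acal Ccal t = (Qt t).toReal := by
      intro t
      rw [Qfun, hQteq, ENNReal.toReal_mul, ENNReal.toReal_ofReal (Real.exp_nonneg _)]
    have hJxθ : ∀ t, J (xθ t)
        = ENNReal.ofReal (Real.exp (-(a * W0 * (1 + rf)) - Bcal)) * Qt t := by
      intro t
      rw [hJx (xθ t), hQteq]
      have h1 : xθ t ⬝ᵥ m = (Bcal - t * Ccal) / (a * W0) := hxθm t
      have h2 : a * W0 * (xθ t ⬝ᵥ γ) - (a * W0) ^ 2 * (xθ t ⬝ᵥ (S *ᵥ xθ t)) / 2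
          = Acal / 2 - t ^ 2 * Ccal / 2 := by
        have hq2 : t * Ccal = Bcal - a * W0 * (xθ t ⬝ᵥ m) := by
          rw [h1]
          field_simp
          ring
        have h := hquad (xθ t) t hq2
        rw [h]
        have h0 : (a * W0) • xθ t - (S⁻¹ *ᵥ γ - t • (S⁻¹ *ᵥ m)) = 0 := by
          rw [hyθ t, sub_self]
        rw [h0]
        simp
      rw [h1, h2]
      have h3 : -(a * W0 * (1 + rf)) - a * W0 * ((Bcal - t * Ccal) / (a * W0))
          = (-(a * W0 * (1 + rf)) - Bcal) + Ccal * t := by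
        field_simp
        ring
      rw [h3, Real.exp_add, ENNReal.ofReal_mul (Real.exp_nonneg _), mul_assoc]
    -- local minimality of Qt at qd
    set rr : ℝ := (r * (a * W0)) / (‖S⁻¹ *ᵥ m‖ + 1) with hrr
    clear_value rr
    have hrr0 : 0 < rr := by
      rw [hrr]
      positivity
    have hloc : ∀ t : ℝ, |t - qd| < rr → Qt qd ≤ Qt t := by
      intro t ht
      have hxtD : xθ t ∈ D := by
        apply hball
        simp only [Metric.mem_ball, dist_eq_norm]
        have key : (a * W0) • (xθ t - x₀) = (qd - t) • (S⁻¹ *ᵥ m) := by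
          rw [hx0, smul_sub, hyθ t, hyθ qd, sub_sub_sub_cancel_left, ← sub_smul]
        have hdiff : xθ t - x₀ = ((qd - t) / (a * W0)) • (S⁻¹ *ᵥ m) := by
          calc xθ t - x₀ = (1 / (a * W0)) • ((a * W0) • (xθ t - x₀)) := by
                rw [smul_smul, one_div, inv_mul_cancel₀ haW0.ne', one_smul]
            _ = (1 / (a * W0)) • ((qd - t) • (S⁻¹ *ᵥ m)) := by rw [key]
            _ = ((qd - t) / (a * W0)) • (S⁻¹ *ᵥ m) := by
                rw [smul_smul, one_div, div_eq_inv_mul]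
        rw [hdiff, norm_smul, Real.norm_eq_abs, abs_div, abs_of_pos haW0, abs_sub_comm]
        have ht' : |t - qd| * (‖S⁻¹ *ᵥ m‖ + 1) < r * (a * W0) := by
          rw [hrr] at ht
          exact (lt_div_iff₀ (by positivity)).mp ht
        rw [div_mul_eq_mul_div, div_lt_iff₀ haW0]
        nlinarith [abs_nonneg (t - qd), norm_nonneg (S⁻¹ *ᵥ m)]
      have h := hmono (xθ t) hxtD
      rw [hx0] at h
      rw [hJxθ, hJxθ] at h
      exact (ENNReal.mul_le_mul_iff_right (hne0 _) ENNReal.ofReal_ne_top).mp h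
    by_cases hteq : θ = qd
    · exact le_of_eq (by rw [hteq])
    · have habs : 0 < |θ - qd| := abs_pos.mpr (sub_ne_zero.mpr hteq)
      set l : ℝ := min 1 (rr / (2 * |θ - qd|)) with hl
      have hl0 : 0 < l := lt_min one_pos (by positivity)
      have hl1 : l ≤ 1 := min_le_left _ _
      have hmid : |((1 - l) * qd + l * θ) - qd| < rr := by
        have heq : (1 - l) * qd + l * θ - qd = l * (θ - qd) := by ring
        rw [heq, abs_mul, abs_of_pos hl0]
        calc l * |θ - qd| ≤ (rr / (2 * |θ - qd|)) * |θ - qd| :=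
              mul_le_mul_of_nonneg_right (min_le_right _ _) (abs_nonneg _)
          _ = rr / 2 := by field_simp
          _ < rr := by linarith
      have hconv := Qtil_convex P Z hZmeas hZpos Acal Ccal hCpos.le qd θ l hl0.le hl1
      have hconv' : Qt ((1 - l) * qd + l * θ)
          ≤ ENNReal.ofReal (1 - l) * Qt qd + ENNReal.ofReal l * Qt θ := by
        rw [hQt]
        exact hconv
      have h1 : Qt qd ≤ Qt ((1 - l) * qd + l * θ) := hloc _ hmid
      have h3 : Qt qd ≤ Qt θ :=
        local_to_global_aux (hQtfin qd hufin) (hQtfin θ hufinθ) hl0 hl1 (h1.trans hconv')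
      rw [hQfun, hQfun]
      exact ENNReal.toReal_mono (hQtfin θ hufinθ) h3
  · -- the closed form of x₀
    rw [hx0, hxθ]


end
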